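/- Let −1 < p ≤ 0. For all x > 0, one has ((p+2)/(p+1))·𝓘_{p+1}(x) < 1/(p+1) + 𝓘_p(x), i.e. the lower Frame-type bound with constant α = 0 for modified Bessel functions. -/

import Mathlib

open Real

noncomputable def besselJn (p x : ℝ) : ℝ :=
  ∑' n : ℕ, (-(1:ℝ)/4)^n * x^(2*n) / ((Real.Gamma (p+n+1) / Real.Gamma (p+1)) * n.factorial)

noncomputable def besselIn (p x : ℝ) : ℝ :=
  ∑' n : ℕ, ((1:ℝ)/4)^n * x^(2*n) / ((Real.Gamma (p+n+1) / Real.Gamma (p+1)) * n.factorial)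

noncomputable def besselJ (p x : ℝ) : ℝ :=
  ∑' n : ℕ, (-1:ℝ)^n * (x/2)^(p+2*n) / (n.factorial * Real.Gamma (p+n+1))

-- monotonicity of Gamma along the shifted sequence
lemma gamma_seq_ge (q : ℝ) (hq : -1 < q) :
    ∀ n : ℕ, 1 ≤ n → Real.Gamma (q+2) ≤ Real.Gamma (q+n+1) := by
  intro n hn
  induction n, hn using Nat.le_induction with
  | base => apply le_of_eq; norm_num; ring_nf
  | succ n hn ih =>
    have hn1 : (1:ℝ) ≤ (n:ℝ) := by exact_mod_cast hn
    have h1 : (0:ℝ) < q + n + 1 := by linarith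
    have h2 : (1:ℝ) ≤ q + n + 1 := by linarith
    have hpos : 0 < Real.Gamma (q+n+1) := Real.Gamma_pos_of_pos h1
    calc Real.Gamma (q+2) ≤ Real.Gamma (q+n+1) := ih
      _ ≤ (q+n+1) * Real.Gamma (q+n+1) := le_mul_of_one_le_left hpos.le h2
      _ = Real.Gamma (q+(n+1:ℕ)+1) := by
          rw [show q+((n+1:ℕ):ℝ)+1 = (q+(n:ℝ)+1)+1 by push_cast; ring,
            Real.Gamma_add_one h1.ne']

lemma summable_bessel (q x : ℝ) (hq : -1 < q) :
    Summable (fun n : ℕ => ((1:ℝ)/4)^n * x^(2*n) /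
      ((Real.Gamma (q+n+1) / Real.Gamma (q+1)) * n.factorial)) := by
  have hq1 : 0 < Real.Gamma (q+1) := Real.Gamma_pos_of_pos (by linarith)
  have hq2 : 0 < Real.Gamma (q+2) := Real.Gamma_pos_of_pos (by linarith)
  set C := max 1 (Real.Gamma (q+1) / Real.Gamma (q+2)) with hC
  have hC1 : (1:ℝ) ≤ C := le_max_left _ _
  refine Summable.of_nonneg_of_le (fun n => ?_) (fun n => ?_)
    ((Real.summable_pow_div_factorial (x^2/4)).mul_left C)
  · have hG : 0 < Real.Gamma (q+n+1) :=
      Real.Gamma_pos_of_pos (by have : (0:ℝ) ≤ n := n.cast_nonneg; linarith)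
    have hx2 : (0:ℝ) ≤ x^(2*n) := by rw [pow_mul]; positivity
    positivity
  · have hG : 0 < Real.Gamma (q+n+1) :=
      Real.Gamma_pos_of_pos (by have : (0:ℝ) ≤ n := n.cast_nonneg; linarith)
    have hfac : (0:ℝ) < n.factorial := by exact_mod_cast n.factorial_pos
    have key : Real.Gamma (q+1) / Real.Gamma (q+n+1) ≤ C := by
      rcases Nat.eq_zero_or_pos n with h0 | h1
      · subst h0
        simp only [Nat.cast_zero, add_zero]
        rw [div_self hq1.ne']
        exact hC1
      · calc Real.Gamma (q+1) / Real.Gamma (q+n+1)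
            ≤ Real.Gamma (q+1) / Real.Gamma (q+2) :=
              div_le_div_of_nonneg_left hq1.le hq2 (gamma_seq_ge q hq n h1)
          _ ≤ C := le_max_right _ _
    have heq : ((1:ℝ)/4)^n * x^(2*n) / ((Real.Gamma (q+n+1) / Real.Gamma (q+1)) * n.factorial)
        = (x^2/4)^n / n.factorial * (Real.Gamma (q+1) / Real.Gamma (q+n+1)) := by
      rw [pow_mul]
      field_simp
      rw [← mul_pow]; congr 1; ring
    rw [heq]
    have hnn : (0:ℝ) ≤ (x^2/4)^n / n.factorial := by positivity
    calc (x^2/4)^n / n.factorial * (Real.Gamma (q+1) / Real.Gamma (q+n+1))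
        ≤ (x^2/4)^n / n.factorial * C := mul_le_mul_of_nonneg_left key hnn
      _ = C * ((x^2/4)^n / n.factorial) := by ring

theorem modified_frame_lower (p : ℝ) (hp1 : -1 < p) (hp2 : p ≤ 0) (x : ℝ) (hx : 0 < x) :
    ((p+2)/(p+1)) * besselIn (p+1) x < 1/(p+1) + besselIn p x := by
  have hp1' : (0:ℝ) < p + 1 := by linarith
  have hΓ1 : 0 < Real.Gamma (p+1) := Real.Gamma_pos_of_pos hp1'
  set a : ℕ → ℝ := fun n =>
    ((1:ℝ)/4)^n * x^(2*n) / ((Real.Gamma (p+n+1) / Real.Gamma (p+1)) * n.factorial) with ha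
  set t : ℕ → ℝ := fun n =>
    ((1:ℝ)/4)^n * x^(2*n) / ((Real.Gamma (p+1+n+1) / Real.Gamma (p+1+1)) * n.factorial) with ht
  set ind : ℕ → ℝ := fun n => if n = 0 then 1/(p+1) else 0 with hind
  have hGn : ∀ n : ℕ, 0 < Real.Gamma (p+n+1) := fun n =>
    Real.Gamma_pos_of_pos (by have : (0:ℝ) ≤ n := n.cast_nonneg; linarith)
  have hapos : ∀ n : ℕ, 0 < a n := by
    intro n
    have h1 := hGn n
    have h2 := hΓ1
    have hfac : (0:ℝ) < n.factorial := by exact_mod_cast n.factorial_pos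
    have hx2 : (0:ℝ) < x^(2*n) := by positivity
    simp only [ha]
    positivity
  -- key identity
  have key : ∀ n : ℕ, (p+2)/(p+1) * t n = (p+2)/(p+(n:ℝ)+1) * a n := by
    intro n
    have hpn : (0:ℝ) < p + n + 1 := by have : (0:ℝ) ≤ n := n.cast_nonneg; linarith
    have e1 : Real.Gamma (p+1+(n:ℝ)+1) = (p+(n:ℝ)+1) * Real.Gamma (p+(n:ℝ)+1) := by
      rw [show p+1+(n:ℝ)+1 = (p+(n:ℝ)+1)+1 by ring, Real.Gamma_add_one hpn.ne']
    have e2 : Real.Gamma (p+1+1) = (p+1) * Real.Gamma (p+1) := by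
      rw [show p+1+1 = (p+1)+1 by ring, Real.Gamma_add_one hp1'.ne']
    simp only [ht, ha, e1, e2]
    have hfac : ((n.factorial : ℝ)) ≠ 0 := by exact_mod_cast n.factorial_ne_zero
    field_simp
  -- nonneg of LHS terms
  have hF0 : ∀ n : ℕ, 0 ≤ (p+2)/(p+1) * t n := by
    intro n
    rw [key n]
    have hpn : (0:ℝ) < p + n + 1 := by have : (0:ℝ) ≤ n := n.cast_nonneg; linarith
    have hp2' : (0:ℝ) < p + 2 := by linarith
    exact mul_nonneg (div_nonneg hp2'.le hpn.le) (hapos n).le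
  -- pointwise inequality
  have hle : ∀ n : ℕ, (p+2)/(p+1) * t n ≤ a n + ind n := by
    intro n
    rw [key n]
    rcases n with _ | m
    · have ha0 : a 0 = 1 := by
        simp only [ha]
        norm_num [div_self hΓ1.ne']
      simp only [hind, Nat.cast_zero, add_zero, if_pos rfl, ha0, mul_one]
      apply le_of_eq
      field_simp
      ring
    · have hm : (1:ℝ) ≤ ((m+1:ℕ):ℝ) := by exact_mod_cast Nat.one_le_iff_ne_zero.mpr (Nat.succ_ne_zero m)
      have hpn : (0:ℝ) < p + ((m+1:ℕ):ℝ) + 1 := by linarith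
      have hr : (p+2)/(p+((m+1:ℕ):ℝ)+1) ≤ 1 := by
        rw [div_le_one hpn]; linarith
      have : (p+2)/(p+((m+1:ℕ):ℝ)+1) * a (m+1) ≤ 1 * a (m+1) :=
        mul_le_mul_of_nonneg_right hr (hapos (m+1)).le
      have hindnn : 0 ≤ ind (m+1) := by
        simp only [hind]
        positivity
      linarith [this]
  -- strict at n = 2
  have hstrict : (p+2)/(p+1) * t 2 < a 2 + ind 2 := by
    rw [key 2]
    have hind2 : ind 2 = 0 := by simp [hind]
    have hr : (p+2)/(p+((2:ℕ):ℝ)+1) < 1 := by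
      rw [div_lt_one (by norm_num; linarith)]
      push_cast; linarith
    have := mul_lt_mul_of_pos_right hr (hapos 2)
    rw [one_mul] at this
    rw [hind2, add_zero]
    exact_mod_cast this
  -- summabilities
  have hsa : Summable a := summable_bessel p x hp1
  have hsind : Summable ind := by
    have := (hasSum_ite_eq (0:ℕ) (1/(p+1))).summable
    convert this using 2 with n
  have hsg : Summable (fun n => a n + ind n) := hsa.add hsind
  -- assemble
  have hLHS : ((p+2)/(p+1)) * besselIn (p+1) x = ∑' n, (p+2)/(p+1) * t n := by
    rw [besselIn, tsum_mul_left]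
  have hRHS : 1/(p+1) + besselIn p x = ∑' n, (a n + ind n) := by
    rw [besselIn, Summable.tsum_add hsa hsind]
    have : ∑' n, ind n = 1/(p+1) := tsum_ite_eq 0 (fun _ => 1/(p+1))
    rw [this]
    ring
  rw [hLHS, hRHS]
  exact Summable.tsum_lt_tsum_of_nonneg hF0 hle hstrict hsg
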